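/- arXiv:2509.11785 — 2 statements merged into one kernel-verified Lean document; each statement's English description precedes it below -/
import Mathlib

section
/- Let ℐ ∈ I_ℋ(X, 𝒜) be a unital CP instrument. Then ℐ is a C*-extreme point of I_ℋ(X, 𝒜) if and only if for every CP instrument 𝒥 : 𝒪(X) → CP(𝒜, B(ℋ)) that is dominated by ℐ and such that 𝒥(X)(1_𝒜) is invertible in B(ℋ), there exists an invertible operator S ∈ B(ℋ) such that 𝒥(A)(a) = S*ℐ(A)(a)S for all a ∈ 𝒜 and A ∈ 𝒪(X). -/
open scoped InnerProductSpace ComplexOrder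
open Function

noncomputable section

/-- A linear map `φ : A →ₗ[ℂ] B(H)` is completely positive if for all `n`, `a : Fin n → A`
and `h : Fin n → H` one has `0 ≤ ∑ i j, ⟪h i, φ(aᵢ* aⱼ) (h j)⟫`. -/
def IsCompletelyPositive {A H : Type*} [NormedRing A] [StarRing A] [NormedAlgebra ℂ A]
    [NormedAddCommGroup H] [InnerProductSpace ℂ H]
    (φ : A →ₗ[ℂ] (H →L[ℂ] H)) : Prop :=
  ∀ (n : ℕ) (a : Fin n → A) (h : Fin n → H),
    0 ≤ ∑ i, ∑ j, (inner ℂ (h i) (φ (star (a i) * a j) (h j)) : ℂ)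

/-- A CP instrument on a measurable space `X` with values in `CP(A, B(H))`:
each `ℐ(s)` is completely positive and `s ↦ ⟪h, ℐ(s)(a) k⟫` is countably additive. -/
structure CPInstrument (X : Type*) [MeasurableSpace X] (A : Type*) (H : Type*)
    [NormedRing A] [StarRing A] [NormedAlgebra ℂ A]
    [NormedAddCommGroup H] [InnerProductSpace ℂ H] where
  toFun : Set X → A →ₗ[ℂ] (H →L[ℂ] H)
  cp : ∀ s : Set X, MeasurableSet s → IsCompletelyPositive (toFun s)
  countably_additive : ∀ (a : A) (h k : H) (s : ℕ → Set X),
    (∀ n, MeasurableSet (s n)) → Pairwise (Disjoint on s) →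
    HasSum (fun n => (inner ℂ h (toFun (s n) a k) : ℂ)) (inner ℂ h (toFun (⋃ n, s n) a k))

/-- A CP instrument is unital (normalized) if `ℐ(X)(1) = I`. -/
def CPInstrument.IsUnital {X A H : Type*} [MeasurableSpace X] [NormedRing A] [StarRing A]
    [NormedAlgebra ℂ A] [NormedAddCommGroup H] [InnerProductSpace ℂ H]
    (J : CPInstrument X A H) : Prop :=
  J.toFun Set.univ 1 = 1

/-- A projection-valued (spectral) measure on `X` acting on `K`. -/
structure IsPVM {X K : Type*} [MeasurableSpace X] [NormedAddCommGroup K]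
    [InnerProductSpace ℂ K] [CompleteSpace K] (E : Set X → K →L[ℂ] K) : Prop where
  selfAdjoint : ∀ s : Set X, MeasurableSet s → IsSelfAdjoint (E s)
  idempotent : ∀ s : Set X, MeasurableSet s → E s * E s = E s
  map_univ : E Set.univ = 1
  countably_additive : ∀ (h k : K) (s : ℕ → Set X),
    (∀ n, MeasurableSet (s n)) → Pairwise (Disjoint on s) →
    HasSum (fun n => (inner ℂ h (E (s n) k) : ℂ)) (inner ℂ h (E (⋃ n, s n) k))

/-- `(K, π, E, V)` is a minimal bi-dilation of the CP instrument `J`: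
`E` is a spectral measure commuting with the unital *-homomorphism `π`,
`J(s)(a) = V* π(a) E(s) V`, and `[π(A) E(𝒪(X)) V H] = K`. -/
structure IsMinimalBiDilation {X A H K : Type*} [MeasurableSpace X]
    [NormedRing A] [StarRing A] [NormedAlgebra ℂ A]
    [NormedAddCommGroup H] [InnerProductSpace ℂ H] [CompleteSpace H]
    [NormedAddCommGroup K] [InnerProductSpace ℂ K] [CompleteSpace K]
    (J : CPInstrument X A H) (π : A →⋆ₐ[ℂ] (K →L[ℂ] K))
    (E : Set X → K →L[ℂ] K) (V : H →L[ℂ] K) : Prop where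
  pvm : IsPVM E
  commutes : ∀ (s : Set X) (a : A), MeasurableSet s → E s * π a = π a * E s
  dilation : ∀ (s : Set X) (a : A), MeasurableSet s →
    J.toFun s a = (ContinuousLinearMap.adjoint V).comp ((π a * E s).comp V)
  minimal : (Submodule.span ℂ {y : K | ∃ (a : A) (s : Set X) (h : H),
      MeasurableSet s ∧ y = π a (E s (V h))}).topologicalClosure = ⊤

section ConvexityDefs

variable {X A H : Type*} [MeasurableSpace X] [NormedRing A] [StarRing A]
    [NormedAlgebra ℂ A] [NormedAddCommGroup H] [InnerProductSpace ℂ H] [CompleteSpace H]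

/-- `J'` is dominated by `J` if `J(s) - J'(s)` is completely positive for every measurable `s`. -/
def CPInstrument.Dominates (J J' : CPInstrument X A H) : Prop :=
  ∀ s : Set X, MeasurableSet s → IsCompletelyPositive (J.toFun s - J'.toFun s)

/-- A CP instrument is pure if every CP instrument it dominates is of the form `t • J`
for some `t ∈ [0,1]`. -/
def CPInstrument.IsPure (J : CPInstrument X A H) : Prop :=
  ∀ J' : CPInstrument X A H, J.Dominates J' →
    ∃ t : ℝ, 0 ≤ t ∧ t ≤ 1 ∧ ∀ s : Set X, MeasurableSet s → J'.toFun s = (t : ℂ) • J.toFun s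

/-- Extreme point of the convex set `I_H(X, A)` of unital CP instruments. -/
def CPInstrument.IsExtreme (J : CPInstrument X A H) : Prop :=
  J.IsUnital ∧ ∀ (J₁ J₂ : CPInstrument X A H) (t : ℝ), J₁.IsUnital → J₂.IsUnital →
    0 < t → t < 1 →
    (∀ s : Set X, MeasurableSet s →
      J.toFun s = (t : ℂ) • J₁.toFun s + ((1 - t : ℝ) : ℂ) • J₂.toFun s) →
    ∀ s : Set X, MeasurableSet s → J₁.toFun s = J.toFun s ∧ J₂.toFun s = J.toFun s

/-- C*-extreme point of the set `I_H(X, A)` of unital CP instruments: every proper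
C*-convex combination representing `J` consists of instruments unitarily equivalent to `J`. -/
def CPInstrument.IsCstarExtreme (J : CPInstrument X A H) : Prop :=
  J.IsUnital ∧ ∀ (n : ℕ) (Js : Fin n → CPInstrument X A H) (T : Fin n → H →L[ℂ] H),
    (∀ i, (Js i).IsUnital) → (∀ i, IsUnit (T i)) →
    (∑ i, ContinuousLinearMap.adjoint (T i) * T i) = 1 →
    (∀ (s : Set X) (a : A), MeasurableSet s →
      J.toFun s a = ∑ i, ContinuousLinearMap.adjoint (T i) * ((Js i).toFun s a) * T i) →
    ∀ i, ∃ U : H →L[ℂ] H,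
      ContinuousLinearMap.adjoint U * U = 1 ∧ U * ContinuousLinearMap.adjoint U = 1 ∧
      ∀ (s : Set X) (a : A), MeasurableSet s →
        (Js i).toFun s a = ContinuousLinearMap.adjoint U * (J.toFun s a) * U

end ConvexityDefs

namespace CstarAux

variable {X A H : Type*} [MeasurableSpace X] [NormedRing A] [StarRing A]
    [NormedAlgebra ℂ A] [NormedAddCommGroup H] [InnerProductSpace ℂ H] [CompleteSpace H]

/-- Conjugation of a linear map by an operator. -/
def conjMap (T : H →L[ℂ] H) (φ : A →ₗ[ℂ] (H →L[ℂ] H)) : A →ₗ[ℂ] (H →L[ℂ] H) where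
  toFun a := star T * φ a * T
  map_add' a b := by simp [mul_add, add_mul]
  map_smul' c a := by simp [mul_smul_comm, smul_mul_assoc]

@[simp] lemma conjMap_apply (T : H →L[ℂ] H) (φ : A →ₗ[ℂ] (H →L[ℂ] H)) (a : A) :
    conjMap T φ a = star T * φ a * T := rfl

set_option linter.unusedSectionVars false

lemma ICP_conj {φ : A →ₗ[ℂ] (H →L[ℂ] H)} (hφ : IsCompletelyPositive φ)
    (T : H →L[ℂ] H) : IsCompletelyPositive (conjMap T φ) := by
  intro n a h
  have key := hφ n a (fun i => T (h i))
  have e : ∀ i j : Fin n, (inner ℂ (h i) ((conjMap T φ) (star (a i) * a j) (h j)) : ℂ)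
      = inner ℂ (T (h i)) (φ (star (a i) * a j) (T (h j))) := by
    intro i j
    simp only [conjMap_apply, ContinuousLinearMap.mul_apply,
      ContinuousLinearMap.star_eq_adjoint, ContinuousLinearMap.adjoint_inner_right]
  simpa only [e] using key

lemma ICP_add {φ ψ : A →ₗ[ℂ] (H →L[ℂ] H)} (hφ : IsCompletelyPositive φ)
    (hψ : IsCompletelyPositive ψ) : IsCompletelyPositive (φ + ψ) := by
  intro n a h
  have := add_nonneg (hφ n a h) (hψ n a h)
  simpa only [LinearMap.add_apply, ContinuousLinearMap.add_apply, inner_add_right,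
    Finset.sum_add_distrib] using this

lemma ICP_zero : IsCompletelyPositive (0 : A →ₗ[ℂ] (H →L[ℂ] H)) := by
  intro n a h
  simp

lemma ICP_smul {φ : A →ₗ[ℂ] (H →L[ℂ] H)} {t : ℂ} (ht : 0 ≤ t)
    (hφ : IsCompletelyPositive φ) : IsCompletelyPositive (t • φ) := by
  intro n a h
  have := mul_nonneg ht (hφ n a h)
  simpa only [LinearMap.smul_apply, ContinuousLinearMap.smul_apply, inner_smul_right,
    Finset.mul_sum] using this

lemma ICP_sum {ι : Type*} (F : Finset ι)
    (φ : ι → (A →ₗ[ℂ] (H →L[ℂ] H))) (h : ∀ i ∈ F, IsCompletelyPositive (φ i)) :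
    IsCompletelyPositive (∑ i ∈ F, φ i) := by
  classical
  induction F using Finset.cons_induction with
  | empty => simpa using ICP_zero
  | cons i F hi ih =>
    rw [Finset.sum_cons]
    exact ICP_add (h i (Finset.mem_cons_self i F))
      (ih fun j hj => h j (Finset.mem_cons_of_mem hj))

lemma nonneg_of_inner {T : H →L[ℂ] H} (hT : ∀ x : H, 0 ≤ (inner ℂ x (T x) : ℂ)) :
    0 ≤ T := by
  rw [ContinuousLinearMap.nonneg_iff_isPositive]
  have hreal : ∀ v : H, ((inner ℂ v (T v) : ℂ)).im = 0 := by
    intro v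
    have := hT v
    rw [Complex.le_def] at this
    exact this.2.symm
  have hsymm : (T : H →ₗ[ℂ] H).IsSymmetric := by
    rw [LinearMap.isSymmetric_iff_inner_map_self_real]
    intro v
    have h1 : (inner ℂ ((T : H →ₗ[ℂ] H) v) v : ℂ) = starRingEnd ℂ (inner ℂ v (T v) : ℂ) := by
      rw [ContinuousLinearMap.coe_coe]
      exact (inner_conj_symm (T v) v).symm
    rw [h1, Complex.conj_conj, (Complex.conj_eq_iff_im).mpr (hreal v)]
  refine ⟨hsymm, fun x => ?_⟩
  have := hT x
  rw [Complex.le_def] at this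
  have h2 : T.reApplyInnerSelf x = ((inner ℂ x (T x) : ℂ)).re := by
    rw [ContinuousLinearMap.reApplyInnerSelf_apply, ← inner_conj_symm (T x) x]
    exact Complex.conj_re _
  rw [h2]
  simpa using this.1

end CstarAux


namespace CstarAux
section
set_option linter.unusedSectionVars false

variable {X A H : Type*} [MeasurableSpace X] [NormedRing A] [StarRing A]
    [NormedAlgebra ℂ A] [NormedAddCommGroup H] [InnerProductSpace ℂ H] [CompleteSpace H]

lemma isUnit_of_sq {M : Type*} [Monoid M] {t c : M} (h : t * t = c) (hc : IsUnit c) :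
    IsUnit t := by
  have hcomm : Commute t c := by
    rw [← h]; exact (Commute.refl t).mul_right (Commute.refl t)
  have hu : (hc.unit : M) = c := hc.unit_spec
  have hcomm' : Commute t ((hc.unit⁻¹ : Mˣ) : M) :=
    Commute.units_inv_right (by rw [hu]; exact hcomm)
  refine ⟨⟨t, (hc.unit⁻¹ : Mˣ) * t, ?_, ?_⟩, rfl⟩
  · calc t * ((hc.unit⁻¹ : Mˣ) * t) = t * (t * (hc.unit⁻¹ : Mˣ)) := by rw [hcomm'.eq]
    _ = (t * t) * (hc.unit⁻¹ : Mˣ) := by rw [mul_assoc]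
    _ = c * (hc.unit⁻¹ : Mˣ) := by rw [h]
    _ = 1 := hc.mul_val_inv
  · calc ((hc.unit⁻¹ : Mˣ) : M) * t * t = (hc.unit⁻¹ : Mˣ) * c := by rw [mul_assoc, h]
    _ = 1 := hc.val_inv_mul

lemma star_unit_inv {M : Type*} [Monoid M] [StarMul M] (u : Mˣ) (h : star (u : M) = u) :
    star ((u⁻¹ : Mˣ) : M) = ((u⁻¹ : Mˣ) : M) := by
  have h1 : star ((u⁻¹ : Mˣ) : M) * (u : M) = 1 := by
    conv_lhs => rw [← h]
    rw [← star_mul, Units.mul_inv, star_one]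
  calc star ((u⁻¹ : Mˣ) : M) = star ((u⁻¹ : Mˣ) : M) * ((u : M) * (u⁻¹ : Mˣ)) := by
        rw [Units.mul_inv, mul_one]
  _ = (star ((u⁻¹ : Mˣ) : M) * (u : M)) * (u⁻¹ : Mˣ) := by rw [mul_assoc]
  _ = (u⁻¹ : Mˣ) := by rw [h1, one_mul]

lemma unit_sandwich {M : Type*} [Monoid M] (u : Mˣ) (x : M) :
    (u : M) * (((u⁻¹ : Mˣ) : M) * x * ((u⁻¹ : Mˣ) : M)) * (u : M) = x := by
  simp [mul_assoc]

/-- Conjugation of a CP instrument by an operator. -/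
def conjI (J : CPInstrument X A H) (T : H →L[ℂ] H) : CPInstrument X A H where
  toFun s := conjMap T (J.toFun s)
  cp s hs := ICP_conj (J.cp s hs) T
  countably_additive a h k s hs hd := by
    have key := J.countably_additive a (T h) (T k) s hs hd
    have e : ∀ u : Set X, (inner ℂ h ((conjMap T (J.toFun u)) a k) : ℂ)
        = inner ℂ (T h) (J.toFun u a (T k)) := by
      intro u
      simp only [conjMap_apply, ContinuousLinearMap.mul_apply,
        ContinuousLinearMap.star_eq_adjoint, ContinuousLinearMap.adjoint_inner_right]
    simpa only [e] using key

/-- Scalar multiple of a CP instrument. -/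
def smulI (t : ℂ) (ht : 0 ≤ t) (J : CPInstrument X A H) : CPInstrument X A H where
  toFun s := t • J.toFun s
  cp s hs := ICP_smul ht (J.cp s hs)
  countably_additive a h k s hs hd := by
    have key := (J.countably_additive a h k s hs hd).mul_left t
    simpa only [LinearMap.smul_apply, ContinuousLinearMap.smul_apply, inner_smul_right]
      using key

/-- Difference of a CP instrument and one it dominates. -/
def subI (J J' : CPInstrument X A H) (hd : J.Dominates J') : CPInstrument X A H where
  toFun s := J.toFun s - J'.toFun s
  cp s hs := hd s hs
  countably_additive a h k s hs hdisj := by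
    have key := (J.countably_additive a h k s hs hdisj).sub
      (J'.countably_additive a h k s hs hdisj)
    simpa only [LinearMap.sub_apply, ContinuousLinearMap.sub_apply, inner_sub_right]
      using key

@[simp] lemma conjI_toFun (J : CPInstrument X A H) (T : H →L[ℂ] H) (s : Set X) :
    (conjI J T).toFun s = conjMap T (J.toFun s) := rfl

@[simp] lemma smulI_toFun (t : ℂ) (ht : 0 ≤ t) (J : CPInstrument X A H) (s : Set X) :
    (smulI t ht J).toFun s = t • J.toFun s := rfl

@[simp] lemma subI_toFun (J J' : CPInstrument X A H) (hd : J.Dominates J') (s : Set X) :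
    (subI J J' hd).toFun s = J.toFun s - J'.toFun s := rfl

lemma zero_le_ofReal {r : ℝ} (hr : 0 ≤ r) : (0 : ℂ) ≤ (r : ℂ) := by
  rw [Complex.le_def]
  simp [hr]

lemma cp_nonneg_one {φ : A →ₗ[ℂ] (H →L[ℂ] H)} (hφ : IsCompletelyPositive φ) :
    0 ≤ φ 1 := by
  apply nonneg_of_inner
  intro x
  have := hφ 1 (fun _ => 1) (fun _ => x)
  simpa using this

end
end CstarAux


/-- A unital CP instrument `ℐ` is C*-extreme in `I_ℋ(X, 𝒜)` iff every CP instrument `𝒥`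
dominated by `ℐ` with `𝒥(X)(1)` invertible is of the form `𝒥(A)(a) = S* ℐ(A)(a) S` for
some invertible `S ∈ B(ℋ)`. -/
theorem CPInstrument.cstarExtreme_iff_dominated_conjugate
    {X A H : Type*} [MeasurableSpace X]
    [NormedRing A] [StarRing A] [CStarRing A] [NormedAlgebra ℂ A] [StarModule ℂ A]
    [CompleteSpace A] [NormedAddCommGroup H] [InnerProductSpace ℂ H] [CompleteSpace H]
    (J : CPInstrument X A H) (hu : J.IsUnital) :
    J.IsCstarExtreme ↔
      ∀ J' : CPInstrument X A H, J.Dominates J' → IsUnit (J'.toFun Set.univ 1) →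
        ∃ S : H →L[ℂ] H, IsUnit S ∧
          ∀ (s : Set X) (a : A), MeasurableSet s →
            J'.toFun s a = ContinuousLinearMap.adjoint S * (J.toFun s a) * S := by
  classical
  constructor
  · -- forward direction
    intro hcs J' hdom hD
    have h3 : J.toFun Set.univ 1 = 1 := hu
    have hhalf : (0:ℂ) ≤ (2⁻¹ : ℂ) := by
      have := CstarAux.zero_le_ofReal (by norm_num : (0:ℝ) ≤ 2⁻¹)
      simpa using this
    set Jh := CstarAux.smulI (2⁻¹:ℂ) hhalf J' with hJh
    have hJhtoFun : ∀ s : Set X, Jh.toFun s = (2⁻¹:ℂ) • J'.toFun s := fun s => rfl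
    have hdomh : J.Dominates Jh := by
      intro s hs
      have h4 := CstarAux.ICP_add (hdom s hs) (CstarAux.ICP_smul hhalf (J'.cp s hs))
      have he : J.toFun s - Jh.toFun s
          = (J.toFun s - J'.toFun s) + (2⁻¹:ℂ) • J'.toFun s := by
        rw [hJhtoFun]
        module
      rw [he]; exact h4
    have hD0 : 0 ≤ J'.toFun Set.univ 1 :=
      CstarAux.cp_nonneg_one (J'.cp Set.univ MeasurableSet.univ)
    have hD1 : J'.toFun Set.univ 1 ≤ 1 := by
      have := CstarAux.cp_nonneg_one (hdom Set.univ MeasurableSet.univ)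
      rw [LinearMap.sub_apply, h3] at this
      exact sub_nonneg.mp this
    set c := Jh.toFun Set.univ 1 with hcdef
    have hc_eq : c = (2⁻¹:ℂ) • J'.toFun Set.univ 1 := by
      rw [hcdef, hJhtoFun, LinearMap.smul_apply]
    have hc0 : 0 ≤ c := CstarAux.cp_nonneg_one (Jh.cp Set.univ MeasurableSet.univ)
    have hc1 : 0 ≤ 1 - c := by
      have := CstarAux.cp_nonneg_one (hdomh Set.univ MeasurableSet.univ)
      rwa [LinearMap.sub_apply, h3] at this
    have hc1' : c ≤ 1 := sub_nonneg.mp hc1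
    have hcu : IsUnit c := by
      rw [hc_eq, Algebra.smul_def]
      exact (IsUnit.map (algebraMap ℂ (H →L[ℂ] H))
        (isUnit_iff_ne_zero.mpr (by norm_num))).mul hD
    have h1cu : IsUnit (1 - c) := by
      have hnorm : ‖c‖ < 1 := by
        have hn1 : ‖c‖ ≤ 1 := (CStarAlgebra.norm_le_one_iff_of_nonneg c hc0).mpr hc1'
        have hn2 : ‖c‖ ≤ 2⁻¹ := by
          rw [hc_eq, norm_smul]
          have hD' : ‖J'.toFun Set.univ 1‖ ≤ 1 :=
            (CStarAlgebra.norm_le_one_iff_of_nonneg _ hD0).mpr hD1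
          have : ‖(2⁻¹:ℂ)‖ = 2⁻¹ := by norm_num
          rw [this]
          calc 2⁻¹ * ‖J'.toFun Set.univ 1‖ ≤ 2⁻¹ * 1 := by
                exact mul_le_mul_of_nonneg_left hD' (by norm_num)
          _ = 2⁻¹ := by norm_num
        linarith
      exact (Units.oneSub c hnorm).isUnit
    set T₁ := CFC.sqrt c with hT1def
    set T₂ := CFC.sqrt (1 - c) with hT2def
    have hT1sq : T₁ * T₁ = c := CFC.sqrt_mul_sqrt_self c hc0
    have hT2sq : T₂ * T₂ = 1 - c := CFC.sqrt_mul_sqrt_self _ hc1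
    have hT1n : (0 : H →L[ℂ] H) ≤ T₁ := CFC.sqrt_nonneg _
    have hT2n : (0 : H →L[ℂ] H) ≤ T₂ := CFC.sqrt_nonneg _
    have hT1sa : star T₁ = T₁ := (IsSelfAdjoint.of_nonneg hT1n).star_eq
    have hT2sa : star T₂ = T₂ := (IsSelfAdjoint.of_nonneg hT2n).star_eq
    have hT1u : IsUnit T₁ := CstarAux.isUnit_of_sq hT1sq hcu
    have hT2u : IsUnit T₂ := CstarAux.isUnit_of_sq hT2sq h1cu
    set u₁ := hT1u.unit with hu₁def
    set u₂ := hT2u.unit with hu₂def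
    have hu₁ : (u₁ : H →L[ℂ] H) = T₁ := hT1u.unit_spec
    have hu₂ : (u₂ : H →L[ℂ] H) = T₂ := hT2u.unit_spec
    have hB1 : star ((u₁⁻¹ : _ˣ) : H →L[ℂ] H) = ((u₁⁻¹ : _ˣ) : H →L[ℂ] H) :=
      CstarAux.star_unit_inv u₁ (by rw [hu₁]; exact hT1sa)
    have hB2 : star ((u₂⁻¹ : _ˣ) : H →L[ℂ] H) = ((u₂⁻¹ : _ˣ) : H →L[ℂ] H) :=
      CstarAux.star_unit_inv u₂ (by rw [hu₂]; exact hT2sa)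
    set K₁ := CstarAux.conjI Jh ((u₁⁻¹ : _ˣ) : H →L[ℂ] H) with hK₁
    set K₂ := CstarAux.conjI (CstarAux.subI J Jh hdomh) ((u₂⁻¹ : _ˣ) : H →L[ℂ] H) with hK₂
    have hK1u : K₁.IsUnital := by
      show K₁.toFun Set.univ 1 = 1
      rw [hK₁, CstarAux.conjI_toFun, CstarAux.conjMap_apply, hB1, ← hcdef,
        ← hT1sq, ← hu₁]
      simp [mul_assoc]
    have hK2u : K₂.IsUnital := by
      show K₂.toFun Set.univ 1 = 1
      rw [hK₂, CstarAux.conjI_toFun, CstarAux.conjMap_apply, hB2, CstarAux.subI_toFun,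
        LinearMap.sub_apply, h3, ← hcdef, ← hT2sq, ← hu₂]
      simp [mul_assoc]
    have hKu : ∀ i : Fin 2, (![K₁, K₂] i).IsUnital := by
      intro i; fin_cases i
      · exact hK1u
      · exact hK2u
    have hTu : ∀ i : Fin 2, IsUnit (![T₁, T₂] i) := by
      intro i; fin_cases i
      · exact hT1u
      · exact hT2u
    have hTsum : (∑ i : Fin 2, ContinuousLinearMap.adjoint (![T₁, T₂] i) * ![T₁, T₂] i) = 1 := by
      rw [Fin.sum_univ_two]
      simp only [Matrix.cons_val_zero, Matrix.cons_val_one, Matrix.head_cons]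
      rw [← ContinuousLinearMap.star_eq_adjoint, ← ContinuousLinearMap.star_eq_adjoint,
        hT1sa, hT2sa, hT1sq, hT2sq]
      abel
    have hdec : ∀ (s : Set X) (a : A), MeasurableSet s →
        J.toFun s a = ∑ i : Fin 2,
          ContinuousLinearMap.adjoint (![T₁, T₂] i) * ((![K₁, K₂] i).toFun s a) * ![T₁, T₂] i := by
      intro s a hs
      rw [Fin.sum_univ_two]
      simp only [Matrix.cons_val_zero, Matrix.cons_val_one, Matrix.head_cons]
      rw [← ContinuousLinearMap.star_eq_adjoint, ← ContinuousLinearMap.star_eq_adjoint,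
        hT1sa, hT2sa, hK₁, hK₂, CstarAux.conjI_toFun, CstarAux.conjI_toFun,
        CstarAux.conjMap_apply, CstarAux.conjMap_apply, hB1, hB2, ← hu₁, ← hu₂,
        CstarAux.unit_sandwich u₁ _, CstarAux.unit_sandwich u₂ _,
        CstarAux.subI_toFun, LinearMap.sub_apply]
      abel
    obtain ⟨U, hU1, hU2, hUeq⟩ := hcs.2 2 ![K₁, K₂] ![T₁, T₂] hKu hTu hTsum hdec 0
    have hUu : IsUnit U := by
      refine ⟨⟨U, star U, ?_, ?_⟩, rfl⟩
      · rw [ContinuousLinearMap.star_eq_adjoint]; exact hU2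
      · rw [ContinuousLinearMap.star_eq_adjoint]; exact hU1
    have hsqrt2 : ((Real.sqrt 2 : ℝ) : ℂ) ≠ 0 :=
      Complex.ofReal_ne_zero.mpr (ne_of_gt (Real.sqrt_pos.mpr (by norm_num)))
    refine ⟨((Real.sqrt 2 : ℝ) : ℂ) • (U * T₁), ?_, ?_⟩
    · rw [Algebra.smul_def]
      exact (IsUnit.map (algebraMap ℂ (H →L[ℂ] H))
        (isUnit_iff_ne_zero.mpr hsqrt2)).mul (hUu.mul hT1u)
    · intro s a hs
      have hK1eq := hUeq s a hs
      simp only [Matrix.cons_val_zero] at hK1eq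
      have hK1eq' : (2⁻¹:ℂ) • J'.toFun s a
          = T₁ * (star U * (J.toFun s a) * U) * T₁ := by
        rw [← ContinuousLinearMap.star_eq_adjoint] at hK1eq
        rw [← hK1eq, hK₁, CstarAux.conjI_toFun, CstarAux.conjMap_apply, hB1,
          hJhtoFun, LinearMap.smul_apply, ← hu₁, CstarAux.unit_sandwich u₁ _]
      rw [← ContinuousLinearMap.star_eq_adjoint]
      have hstarS : star (((Real.sqrt 2 : ℝ) : ℂ) • (U * T₁))
          = ((Real.sqrt 2 : ℝ) : ℂ) • (T₁ * star U) := by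
        rw [star_smul, star_mul, hT1sa, Complex.star_def, Complex.conj_ofReal]
      rw [hstarS]
      have h2 : (((Real.sqrt 2 : ℝ) : ℂ) • (T₁ * star U)) * (J.toFun s a)
            * (((Real.sqrt 2 : ℝ) : ℂ) • (U * T₁))
          = (2:ℂ) • (T₁ * (star U * (J.toFun s a) * U) * T₁) := by
        simp only [smul_mul_assoc, mul_smul_comm, smul_smul]
        rw [show (((Real.sqrt 2 : ℝ) : ℂ) * ((Real.sqrt 2 : ℝ) : ℂ)) = (2:ℂ) by
          rw [← Complex.ofReal_mul, Real.mul_self_sqrt (by norm_num)]; norm_num]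
        simp only [mul_assoc]
      rw [h2, ← hK1eq', smul_smul]
      norm_num
  · -- reverse direction
    intro hdomhyp
    refine ⟨hu, ?_⟩
    intro n Js T hJu hT hTsum hmix i
    set Ji : CPInstrument X A H := CstarAux.conjI (Js i) (T i) with hJi
    have hJidom : J.Dominates Ji := by
      intro s hs
      have heq : J.toFun s - Ji.toFun s
          = ∑ j ∈ Finset.univ.erase i, CstarAux.conjMap (T j) ((Js j).toFun s) := by
        refine LinearMap.ext fun a => ?_
        have h1 := hmix s a hs
        rw [← Finset.sum_erase_add _ _ (Finset.mem_univ i)] at h1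
        simp only [LinearMap.sub_apply, LinearMap.coe_sum, Finset.sum_apply,
          CstarAux.conjMap_apply, ContinuousLinearMap.star_eq_adjoint, hJi,
          CstarAux.conjI_toFun]
        rw [h1]
        exact add_sub_cancel_right _ _
      rw [show J.toFun s - Ji.toFun s = _ from heq]
      exact CstarAux.ICP_sum _ _ (fun j _ => CstarAux.ICP_conj ((Js j).cp s hs) (T j))
    have hJiu : IsUnit (Ji.toFun Set.univ 1) := by
      have h2 : (Js i).toFun Set.univ 1 = 1 := hJu i
      have h5 : Ji.toFun Set.univ 1 = star (T i) * T i := by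
        rw [hJi, CstarAux.conjI_toFun, CstarAux.conjMap_apply, h2, mul_one]
      rw [h5]
      exact ((hT i).star).mul (hT i)
    obtain ⟨S, hS, hSeq⟩ := hdomhyp Ji hJidom hJiu
    set ut := (hT i).unit with hut_def
    have hut : (ut : H →L[ℂ] H) = T i := (hT i).unit_spec
    set W : H →L[ℂ] H := S * ((ut⁻¹ : _ˣ) : H →L[ℂ] H) with hW
    have hWkey : ∀ (s : Set X) (a : A), MeasurableSet s →
        (Js i).toFun s a = star W * (J.toFun s a) * W := by
      intro s a hs
      have E : star (T i) * ((Js i).toFun s a) * T i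
          = star S * (J.toFun s a) * S := by
        have h6 := hSeq s a hs
        rw [hJi, CstarAux.conjI_toFun, CstarAux.conjMap_apply,
          ← ContinuousLinearMap.star_eq_adjoint] at h6
        exact h6
      symm
      calc star W * (J.toFun s a) * W
          = star ((ut⁻¹ : _ˣ) : H →L[ℂ] H) * (star S * (J.toFun s a) * S)
            * ((ut⁻¹ : _ˣ) : H →L[ℂ] H) := by
            rw [hW]; simp only [star_mul, mul_assoc]
      _ = star ((ut⁻¹ : _ˣ) : H →L[ℂ] H) * (star (T i) * ((Js i).toFun s a) * T i)
            * ((ut⁻¹ : _ˣ) : H →L[ℂ] H) := by rw [E]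
      _ = (star ((ut⁻¹ : _ˣ) : H →L[ℂ] H) * star ((ut : H →L[ℂ] H)))
            * ((Js i).toFun s a) * ((ut : H →L[ℂ] H) * ((ut⁻¹ : _ˣ) : H →L[ℂ] H)) := by
            rw [hut]; simp only [mul_assoc]
      _ = (Js i).toFun s a := by
            rw [← star_mul, Units.mul_inv, star_one, one_mul, mul_one]
    have hW1 : star W * W = 1 := by
      have h7 := hWkey Set.univ 1 MeasurableSet.univ
      have h8 : (Js i).toFun Set.univ 1 = 1 := hJu i
      have h9 : J.toFun Set.univ 1 = 1 := hu
      rw [h8, h9, mul_one] at h7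
      exact h7.symm
    have hWu : IsUnit W := hS.mul (ut⁻¹ : _ˣ).isUnit
    obtain ⟨w, hw⟩ := hWu
    have hsw : star W = ((w⁻¹ : _ˣ) : H →L[ℂ] H) := by
      rw [← hw] at hW1 ⊢
      calc star ((w : H →L[ℂ] H))
          = star ((w : H →L[ℂ] H)) * ((w : H →L[ℂ] H) * ((w⁻¹ : _ˣ) : H →L[ℂ] H)) := by
            rw [Units.mul_inv, mul_one]
      _ = (star ((w : H →L[ℂ] H)) * (w : H →L[ℂ] H)) * ((w⁻¹ : _ˣ) : H →L[ℂ] H) := by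
            rw [mul_assoc]
      _ = ((w⁻¹ : _ˣ) : H →L[ℂ] H) := by rw [hW1, one_mul]
    have hW2 : W * star W = 1 := by
      rw [hsw, ← hw, Units.mul_inv]
    refine ⟨W, ?_, ?_, ?_⟩
    · rw [← ContinuousLinearMap.star_eq_adjoint]; exact hW1
    · rw [← ContinuousLinearMap.star_eq_adjoint]; exact hW2
    · intro s a hs
      rw [← ContinuousLinearMap.star_eq_adjoint]
      exact hWkey s a hs
end
end

section
/- Let ℋ be a finite-dimensional complex Hilbert space. Then every C*-extreme point of the set I_ℋ(X, 𝒜) of unital CP instruments on (X, 𝒪(X)) with values in CP(𝒜, B(ℋ)) is an extreme point of the convex set I_ℋ(X, 𝒜). -/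
open scoped InnerProductSpace ComplexOrder
open Function

set_option maxHeartbeats 800000

noncomputable section

section HSAux

open ContinuousLinearMap

set_option linter.unusedSectionVars false
set_option maxHeartbeats 800000

variable {H : Type*} [NormedAddCommGroup H] [InnerProductSpace ℂ H] [CompleteSpace H]
  [FiniteDimensional ℂ H]

noncomputable def hsInner (a b : H →L[ℂ] H) : ℂ :=
  LinearMap.trace ℂ H ((adjoint a * b : H →L[ℂ] H) : H →ₗ[ℂ] H)

lemma hsInner_conj_invariant {u : H →L[ℂ] H} (hu : u * adjoint u = 1) (y z : H →L[ℂ] H) :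
    hsInner (adjoint u * y * u) (adjoint u * z * u) = hsInner y z := by
  have hstar : ∀ w : H →L[ℂ] H, star w = adjoint w := fun w => star_eq_adjoint w
  have hu' : u * star u = 1 := by rw [hstar]; exact hu
  have key : adjoint (adjoint u * y * u) * (adjoint u * z * u)
      = star u * ((adjoint y * z) * u) := by
    simp only [← hstar, star_mul, star_star]
    rw [show star u * (star y * u) * (star u * z * u)
        = star u * (star y * ((u * star u) * (z * u))) from by noncomm_ring, hu', one_mul]
    noncomm_ring
  rw [hsInner, hsInner, key]
  simp only [ContinuousLinearMap.mul_def, ContinuousLinearMap.toLinearMap_comp, ← Module.End.mul_eq_comp]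
  rw [LinearMap.trace_mul_comm, mul_assoc,
    show ((u : H →L[ℂ] H) : H →ₗ[ℂ] H) * ((star u : H →L[ℂ] H) : H →ₗ[ℂ] H) = 1 from by
      rw [Module.End.mul_eq_comp, ← ContinuousLinearMap.toLinearMap_comp,
        ← ContinuousLinearMap.mul_def, hu']; rfl,
    mul_one]

lemma hsInner_self_eq_zero {a : H →L[ℂ] H} (h : hsInner a a = 0) : a = 0 := by
  have key : hsInner a a = ∑ i, (‖a ((stdOrthonormalBasis ℂ H) i)‖ ^ 2 : ℂ) := by
    rw [hsInner, LinearMap.trace_eq_matrix_trace ℂ (stdOrthonormalBasis ℂ H).toBasis,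
      Matrix.trace]
    congr 1; ext i
    rw [Matrix.diag, LinearMap.toMatrix_apply]
    simp [(stdOrthonormalBasis ℂ H).repr_apply_apply, ContinuousLinearMap.mul_apply,
      adjoint_inner_right, inner_self_eq_norm_sq_to_K]
  rw [key] at h
  have h2 : ∑ i, (‖a ((stdOrthonormalBasis ℂ H) i)‖ ^ 2 : ℝ) = 0 := by exact_mod_cast h
  have h3 : ∀ i, a ((stdOrthonormalBasis ℂ H) i) = 0 := by
    intro i
    have := (Finset.sum_eq_zero_iff_of_nonneg (fun i _ => by positivity)).mp h2 i
      (Finset.mem_univ i)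
    simpa using pow_eq_zero_iff (n := 2) (by norm_num) |>.mp this
  have : (a : H →ₗ[ℂ] H) = ((0 : H →L[ℂ] H) : H →ₗ[ℂ] H) :=
    Module.Basis.ext (stdOrthonormalBasis ℂ H).toBasis (by simpa using h3)
  exact ContinuousLinearMap.coe_injective this

lemma key_lemma (x y z u₁ u₂ : H →L[ℂ] H) (t : ℝ) (ht : 0 < t) (ht1 : t < 1)
    (h1' : u₁ * adjoint u₁ = 1) (h2' : u₂ * adjoint u₂ = 1)
    (hy : y = adjoint u₁ * x * u₁) (hz : z = adjoint u₂ * x * u₂)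
    (hx : x = (t : ℂ) • y + ((1 - t : ℝ) : ℂ) • z) : y = x ∧ z = x := by
  have hsadd : ∀ a b c : H →L[ℂ] H, hsInner a (b + c) = hsInner a b + hsInner a c := by
    intro a b c; unfold hsInner; rw [mul_add]
    push_cast [ContinuousLinearMap.coe_add]; rw [map_add]
  have hsadd' : ∀ a b c : H →L[ℂ] H, hsInner (a + b) c = hsInner a c + hsInner b c := by
    intro a b c; unfold hsInner
    rw [map_add, add_mul]; push_cast [ContinuousLinearMap.coe_add]; rw [map_add]
  have hssmul : ∀ (c : ℂ) (a b : H →L[ℂ] H), hsInner a (c • b) = c * hsInner a b := by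
    intro c a b; unfold hsInner; rw [mul_smul_comm]
    push_cast [ContinuousLinearMap.coe_smul]; rw [map_smul]; rfl
  have hssmul' : ∀ (c : ℂ) (a b : H →L[ℂ] H),
      hsInner (c • a) b = (starRingEnd ℂ) c * hsInner a b := by
    intro c a b; unfold hsInner
    rw [show adjoint (c • a) = (starRingEnd ℂ) c • adjoint a from by
      rw [← star_eq_adjoint, ← star_eq_adjoint, star_smul]; rfl, smul_mul_assoc]
    push_cast [ContinuousLinearMap.coe_smul]; rw [map_smul]; rfl
  have hssub : ∀ a b c d : H →L[ℂ] H,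
      hsInner (a - b) (c - d) = hsInner a c - hsInner a d - hsInner b c + hsInner b d := by
    intro a b c d
    rw [sub_eq_add_neg a b, sub_eq_add_neg c d, hsadd, hsadd', hsadd',
      show (-b : H →L[ℂ] H) = (-1 : ℂ) • b from by simp,
      show (-d : H →L[ℂ] H) = (-1 : ℂ) • d from by simp,
      hssmul, hssmul', hssmul, hssmul']
    simp only [map_neg, map_one]
    ring
  have hyy : hsInner y y = hsInner x x := by rw [hy, hsInner_conj_invariant h1']
  have hzz : hsInner z z = hsInner x x := by rw [hz, hsInner_conj_invariant h2']
  have expand : hsInner x x = (t : ℂ)^2 * hsInner y y + ((1-t:ℝ) : ℂ)^2 * hsInner z z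
      + (t : ℂ) * ((1-t:ℝ) : ℂ) * (hsInner y z + hsInner z y) := by
    conv_lhs => rw [hx]
    rw [hsadd, hsadd', hsadd', hssmul, hssmul, hssmul, hssmul, hssmul', hssmul', hssmul', hssmul']
    simp only [Complex.conj_ofReal]
    ring
  have hcross : hsInner y z + hsInner z y = 2 * hsInner x x := by
    rw [hyy, hzz] at expand
    have hne1 : (t : ℂ) ≠ 0 := by exact_mod_cast ne_of_gt ht
    have hne2 : ((1 - t : ℝ) : ℂ) ≠ 0 := by
      exact_mod_cast ne_of_gt (show (0:ℝ) < 1 - t by linarith)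
    push_cast at expand
    have h2 : (t : ℂ) * (1 - (t:ℂ)) * (hsInner y z + hsInner z y)
        = (t : ℂ) * (1 - (t:ℂ)) * (2 * hsInner x x) := by linear_combination (-1:ℂ) * expand
    have hne2' : (1 : ℂ) - (t : ℂ) ≠ 0 := by
      intro h'
      have : ((1 - t : ℝ) : ℂ) = 0 := by push_cast; linear_combination h'
      exact hne2 this
    exact mul_left_cancel₀ (mul_ne_zero hne1 hne2') h2
  have hdiff : hsInner (y - z) (y - z) = 0 := by
    rw [hssub, hyy, hzz]
    linear_combination -hcross
  have hyz : y = z := sub_eq_zero.mp (hsInner_self_eq_zero hdiff)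
  have hxy : x = y := by
    rw [← hyz] at hx
    rw [hx, ← add_smul, show (t : ℂ) + ((1 - t : ℝ) : ℂ) = 1 from by push_cast; ring, one_smul]
  exact ⟨hxy.symm, hyz ▸ hxy.symm⟩


end HSAux

/-- In finite dimensions, every C*-extreme point of the set of unital CP instruments is
an extreme point. -/
theorem CPInstrument.isExtreme_of_isCstarExtreme
    {X A H : Type*} [MeasurableSpace X]
    [NormedRing A] [StarRing A] [CStarRing A] [NormedAlgebra ℂ A] [StarModule ℂ A]
    [CompleteSpace A] [NormedAddCommGroup H] [InnerProductSpace ℂ H] [CompleteSpace H]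
    [FiniteDimensional ℂ H]
    (J : CPInstrument X A H) (hJ : J.IsCstarExtreme) :
    J.IsExtreme := by
  classical
  obtain ⟨hun, hC⟩ := hJ
  refine ⟨hun, ?_⟩
  intro J₁ J₂ t h1 h2 ht ht1 hdecomp
  have ht1' : (0:ℝ) ≤ 1 - t := by linarith
  set c₁ : ℂ := ((Real.sqrt t : ℝ) : ℂ) with hc₁def
  set c₂ : ℂ := ((Real.sqrt (1 - t) : ℝ) : ℂ) with hc₂def
  have hc₁ : (starRingEnd ℂ) c₁ * c₁ = ((t : ℝ) : ℂ) := by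
    rw [hc₁def, Complex.conj_ofReal, ← Complex.ofReal_mul, Real.mul_self_sqrt ht.le]
  have hc₂ : (starRingEnd ℂ) c₂ * c₂ = ((1 - t : ℝ) : ℂ) := by
    rw [hc₂def, Complex.conj_ofReal, ← Complex.ofReal_mul, Real.mul_self_sqrt ht1']
  have hc₁0 : c₁ ≠ 0 := by
    rw [hc₁def]; exact_mod_cast ne_of_gt (Real.sqrt_pos.mpr ht)
  have hc₂0 : c₂ ≠ 0 := by
    rw [hc₂def]; exact_mod_cast ne_of_gt (Real.sqrt_pos.mpr (by linarith))
  set T : Fin 2 → H →L[ℂ] H := ![c₁ • 1, c₂ • 1] with hTdef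
  set Js : Fin 2 → CPInstrument X A H := ![J₁, J₂] with hJsdef
  have hadj : ∀ c : ℂ, ContinuousLinearMap.adjoint (c • (1 : H →L[ℂ] H))
      = (starRingEnd ℂ) c • 1 := by
    intro c
    rw [← ContinuousLinearMap.star_eq_adjoint, star_smul, star_one]
    rfl
  have hconj : ∀ (c : ℂ) (y : H →L[ℂ] H),
      ContinuousLinearMap.adjoint (c • (1 : H →L[ℂ] H)) * y * (c • 1)
        = ((starRingEnd ℂ) c * c) • y := by
    intro c y
    rw [hadj, smul_mul_assoc, one_mul, mul_smul_comm, mul_one, smul_smul, mul_comm]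
  have hUnit : ∀ i, IsUnit (T i) := by
    intro i
    have : ∀ c : ℂ, c ≠ 0 → IsUnit (c • (1 : H →L[ℂ] H)) := by
      intro c hc
      refine isUnit_iff_exists.mpr ⟨c⁻¹ • 1, ?_, ?_⟩ <;>
        rw [smul_mul_smul_comm, one_mul] <;>
        simp [hc, inv_mul_cancel₀, mul_inv_cancel₀]
    fin_cases i
    · exact this c₁ hc₁0
    · exact this c₂ hc₂0
  have hJsUnital : ∀ i, (Js i).IsUnital := by
    intro i; fin_cases i
    · exact h1
    · exact h2
  have hSum : (∑ i, ContinuousLinearMap.adjoint (T i) * T i) = 1 := by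
    rw [Fin.sum_univ_two]
    show ContinuousLinearMap.adjoint (c₁ • 1) * (c₁ • 1)
        + ContinuousLinearMap.adjoint (c₂ • 1) * (c₂ • 1) = 1
    rw [hadj, hadj, smul_mul_smul_comm, smul_mul_smul_comm, one_mul, hc₁, hc₂, ← add_smul]
    push_cast
    rw [show ((t:ℂ) + (1 - (t:ℂ))) = 1 from by ring, one_smul]
  have hDec : ∀ (s : Set X) (a : A), MeasurableSet s →
      J.toFun s a = ∑ i, ContinuousLinearMap.adjoint (T i) * ((Js i).toFun s a) * T i := by
    intro s a hs
    rw [Fin.sum_univ_two]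
    show J.toFun s a = ContinuousLinearMap.adjoint (c₁ • 1) * (J₁.toFun s a) * (c₁ • 1)
        + ContinuousLinearMap.adjoint (c₂ • 1) * (J₂.toFun s a) * (c₂ • 1)
    rw [hconj, hconj, hc₁, hc₂]
    have := LinearMap.ext_iff.mp (hdecomp s hs) a
    simpa using this
  obtain ⟨U₁, hU₁l, hU₁r, hU₁⟩ := hC 2 Js T hJsUnital hUnit hSum hDec 0
  obtain ⟨U₂, hU₂l, hU₂r, hU₂⟩ := hC 2 Js T hJsUnital hUnit hSum hDec 1
  intro s hs
  have key : ∀ a : A, J₁.toFun s a = J.toFun s a ∧ J₂.toFun s a = J.toFun s a := by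
    intro a
    have hy : J₁.toFun s a = ContinuousLinearMap.adjoint U₁ * (J.toFun s a) * U₁ := hU₁ s a hs
    have hz : J₂.toFun s a = ContinuousLinearMap.adjoint U₂ * (J.toFun s a) * U₂ := hU₂ s a hs
    have hx : J.toFun s a = ((t : ℝ) : ℂ) • (J₁.toFun s a)
        + ((1 - t : ℝ) : ℂ) • (J₂.toFun s a) := by
      have := LinearMap.ext_iff.mp (hdecomp s hs) a
      simpa using this
    exact key_lemma (J.toFun s a) (J₁.toFun s a) (J₂.toFun s a) U₁ U₂ t ht ht1
      hU₁r hU₂r hy hz hx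
  exact ⟨LinearMap.ext fun a => (key a).1, LinearMap.ext fun a => (key a).2⟩
end
end
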